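/- arXiv:2203.12018 — 7 statements merged into one kernel-verified Lean document; each statement's English description precedes it below -/
import Mathlib

section
/- Let F₁, F₂ : F_2^n → F_2^n be functions and α, β ∈ F_2^n. Define f : F_2 × F_2^n → F_2^n by f(0,x) = F₂(x ⊕ F₁(α)) ⊕ (α ⊕ β) and f(1,x) = F₂(x ⊕ F₁(β)) ⊕ (α ⊕ β). Then f(b ⊕ 1, x ⊕ F₁(α) ⊕ F₁(β)) = f(b,x) for all b ∈ F_2, x ∈ F_2^n. -/
theorem stmt_4 {n : ℕ} (F₁ F₂ : (Fin n → ZMod 2) → (Fin n → ZMod 2))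
    (α β : Fin n → ZMod 2)
    (f : ZMod 2 × (Fin n → ZMod 2) → (Fin n → ZMod 2))
    (hf0 : ∀ x, f (0, x) = F₂ (x + F₁ α) + (α + β))
    (hf1 : ∀ x, f (1, x) = F₂ (x + F₁ β) + (α + β)) :
    ∀ (b : ZMod 2) (x : Fin n → ZMod 2), f (b + 1, x + F₁ α + F₁ β) = f (b, x) := by
  intro b x
  have hchar : ∀ y : Fin n → ZMod 2, y + y = 0 := by
    intro y; funext i; simp [CharTwo.add_self_eq_zero]
  fin_cases b
  · show f ((0:ZMod 2) + 1, x + F₁ α + F₁ β) = f ((0:ZMod 2), x)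
    rw [show ((0 : ZMod 2) + 1) = 1 from by decide, hf1, hf0]
    congr 1
    have : x + F₁ α + F₁ β + F₁ β = x + F₁ α := by
      rw [add_assoc, hchar, add_zero]
    rw [this]
  · show f ((1:ZMod 2) + 1, x + F₁ α + F₁ β) = f ((1:ZMod 2), x)
    rw [show ((1 : ZMod 2) + 1) = 0 from by decide, hf0, hf1]
    congr 1
    have : x + F₁ α + F₁ β + F₁ α = x + F₁ β := by
      abel_nf
      rw [show (2:ℤ) • F₁ α = F₁ α + F₁ α from two_smul ℤ _, hchar, zero_add]
    rw [this]
end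

section
/- Let p_c, p_d, p_e : F_2^b → F_2^b be functions, r₀, r₁, k' ∈ F_2^b, and define z(m) = p_e(p_d(p_c(m ⊕ r₀) ⊕ p_c(m ⊕ r₁))) ⊕ k'. Then z(m ⊕ r₀ ⊕ r₁) = z(m) for all m ∈ F_2^b. -/
theorem stmt_5 {b : ℕ} (p_c p_d p_e : (Fin b → ZMod 2) → (Fin b → ZMod 2))
    (r₀ r₁ k' : Fin b → ZMod 2)
    (z : (Fin b → ZMod 2) → (Fin b → ZMod 2))
    (hz : ∀ m, z m = p_e (p_d (p_c (m + r₀) + p_c (m + r₁))) + k') :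
    ∀ m, z (m + r₀ + r₁) = z m := by
  intro m
  rw [hz, hz]
  have h2 : ∀ x : Fin b → ZMod 2, x + x = 0 := by
    intro x; funext i; simp [CharTwo.add_self_eq_zero]
  have e0 : m + r₀ + r₁ + r₀ = m + r₁ := by
    have := h2 r₀; rw [add_assoc m r₀ r₁, add_comm r₀ r₁, ← add_assoc m r₁ r₀, add_assoc, this, add_zero]
  have e1 : m + r₀ + r₁ + r₁ = m + r₀ := by
    have := h2 r₁; rw [add_assoc, this, add_zero]
  rw [e0, e1, add_comm (p_c (m + r₁))]
end

section
/- Let p_c, p_d, p_e : F_2^b → F_2^b, let α, β, r₀, r₁, k' ∈ F_2^b, and define z(m) = p_e(p_d(p_c(m ⊕ α ⊕ r₀) ⊕ p_c(m ⊕ β ⊕ r₁))) ⊕ k'. Then z(m ⊕ α ⊕ β ⊕ r₀ ⊕ r₁) = z(m) for all m ∈ F_2^b. -/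
theorem stmt_6 {b : ℕ} (p_c p_d p_e : (Fin b → ZMod 2) → (Fin b → ZMod 2))
    (α β r₀ r₁ k' : Fin b → ZMod 2)
    (z : (Fin b → ZMod 2) → (Fin b → ZMod 2))
    (hz : ∀ m, z m = p_e (p_d (p_c (m + α + r₀) + p_c (m + β + r₁))) + k') :
    ∀ m, z (m + α + β + r₀ + r₁) = z m := by
  intro m
  rw [hz, hz]
  have h1 : m + α + β + r₀ + r₁ + α + r₀ = m + β + r₁ := by
    funext i; simp only [Pi.add_apply]; ring_nf
    simp [CharTwo.two_eq_zero]
  have h2 : m + α + β + r₀ + r₁ + β + r₁ = m + α + r₀ := by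
    funext i; simp only [Pi.add_apply]; ring_nf
    simp [CharTwo.two_eq_zero]
  rw [h1, h2, add_comm (p_c (m + β + r₁))]
end

section
/- Let p_c, p_d, p_e : F_2^b → F_2^b, let r₀, r₁, r₂, r₃, α₀, α₁, k' ∈ F_2^b, and define Y₀(m₀) = p_c(m₀ ⊕ α₀ ⊕ r₀) ⊕ p_c(m₀ ⊕ α₀ ⊕ r₁), Y₁(m₁) = p_c(m₁ ⊕ α₁ ⊕ r₂) ⊕ p_c(m₁ ⊕ α₁ ⊕ r₃), and z(m₀,m₁) = p_e(p_d(Y₀(m₀) ⊕ Y₁(m₁))) ⊕ k'. Then z(m₀ ⊕ r₀ ⊕ r₁, m₁) = z(m₀, m₁) and z(m₀, m₁ ⊕ r₂ ⊕ r₃) = z(m₀, m₁) for all m₀, m₁ ∈ F_2^b. -/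
private lemma aux_self {b : ℕ} (x : Fin b → ZMod 2) : x + x = 0 := by
  funext i; exact CharTwo.add_self_eq_zero _

theorem stmt_8 {b : ℕ} (p_c p_d p_e : (Fin b → ZMod 2) → (Fin b → ZMod 2))
    (r₀ r₁ r₂ r₃ α₀ α₁ k' : Fin b → ZMod 2)
    (Y₀ Y₁ : (Fin b → ZMod 2) → (Fin b → ZMod 2))
    (z : (Fin b → ZMod 2) → (Fin b → ZMod 2) → (Fin b → ZMod 2))
    (hY₀ : ∀ m₀, Y₀ m₀ = p_c (m₀ + α₀ + r₀) + p_c (m₀ + α₀ + r₁))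
    (hY₁ : ∀ m₁, Y₁ m₁ = p_c (m₁ + α₁ + r₂) + p_c (m₁ + α₁ + r₃))
    (hz : ∀ m₀ m₁, z m₀ m₁ = p_e (p_d (Y₀ m₀ + Y₁ m₁)) + k') :
    ∀ m₀ m₁, z (m₀ + r₀ + r₁) m₁ = z m₀ m₁ ∧ z m₀ (m₁ + r₂ + r₃) = z m₀ m₁ := by
  intro m₀ m₁
  have h0 : Y₀ (m₀ + r₀ + r₁) = Y₀ m₀ := by
    rw [hY₀, hY₀]
    have e1 : m₀ + r₀ + r₁ + α₀ + r₀ = m₀ + α₀ + r₁ := by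
      linear_combination aux_self r₀
    have e2 : m₀ + r₀ + r₁ + α₀ + r₁ = m₀ + α₀ + r₀ := by
      linear_combination aux_self r₁
    rw [e1, e2, add_comm]
  have h1 : Y₁ (m₁ + r₂ + r₃) = Y₁ m₁ := by
    rw [hY₁, hY₁]
    have e1 : m₁ + r₂ + r₃ + α₁ + r₂ = m₁ + α₁ + r₃ := by
      linear_combination aux_self r₂
    have e2 : m₁ + r₂ + r₃ + α₁ + r₃ = m₁ + α₁ + r₂ := by
      linear_combination aux_self r₃
    rw [e1, e2, add_comm]
  exact ⟨by rw [hz, hz, h0], by rw [hz, hz, h1]⟩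
end

section
/- Let F : F_2^n → F_2^m and k, σ ∈ F_2^n with s(x) := F(x ⊕ k) ⊕ F(x ⊕ σ ⊕ k) ⊕ C for a constant C ∈ F_2^m. Define Δ(x) = s(x) ⊕ F(x) ⊕ F(x ⊕ σ). Then Δ(x ⊕ k) = Δ(x), Δ(x ⊕ σ) = Δ(x), and Δ(x ⊕ k ⊕ σ) = Δ(x) for all x ∈ F_2^n. -/
theorem stmt_10 {n m : ℕ} (F : (Fin n → ZMod 2) → (Fin m → ZMod 2))
    (k σ : Fin n → ZMod 2) (C : Fin m → ZMod 2)
    (s Δ : (Fin n → ZMod 2) → (Fin m → ZMod 2))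
    (hs : ∀ x, s x = F (x + k) + F (x + σ + k) + C)
    (hΔ : ∀ x, Δ x = s x + F x + F (x + σ)) :
    ∀ x, Δ (x + k) = Δ x ∧ Δ (x + σ) = Δ x ∧ Δ (x + k + σ) = Δ x := by
  have h2 : ∀ a : Fin n → ZMod 2, a + a = 0 := fun a => funext fun i => CharTwo.add_self_eq_zero (a i)
  intro x
  refine ⟨?_, ?_, ?_⟩ <;>
    simp only [hΔ, hs] <;>
    abel_nf <;>
    simp [two_smul, h2, CharTwo.add_self_eq_zero, add_assoc, add_comm, add_left_comm]
end

section
/- Let H, G : list of bits → F_2^m be arbitrary keyed functions and define a 4-round Feistel with F₁(x) = H(x‖0), F₂(x) = G(x‖W‖1), F₃(x) = G(x‖W‖0). For fixed α, let f(m) = F₁(α) ⊕ F₃(α ⊕ F₂(X(m) ⊕ F₁(α))) where X(m) = m‖m and F₁(α) = β₁‖β₂. If the map m ↦ F₂((m ⊕ β₁)‖(m ⊕ β₂)) has period s (i.e. is invariant under m ↦ m ⊕ s), then f(m ⊕ s) = f(m) for all m ∈ F_2^b. -/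
theorem stmt_15 {b : ℕ}
    (F₁ F₂ F₃ : ((Fin b → ZMod 2) × (Fin b → ZMod 2)) →
      ((Fin b → ZMod 2) × (Fin b → ZMod 2)))
    (α : (Fin b → ZMod 2) × (Fin b → ZMod 2))
    (β₁ β₂ : Fin b → ZMod 2) (hβ : F₁ α = (β₁, β₂))
    (f : (Fin b → ZMod 2) → ((Fin b → ZMod 2) × (Fin b → ZMod 2)))
    (hf : ∀ m, f m = F₁ α + F₃ (α + F₂ ((m, m) + F₁ α)))
    (s : Fin b → ZMod 2)
    (hper : ∀ m, F₂ (m + s + β₁, m + s + β₂) = F₂ (m + β₁, m + β₂)) :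
    ∀ m, f (m + s) = f m := by
  intro m
  rw [hf, hf, hβ]
  have : ((m + s, m + s) : (Fin b → ZMod 2) × (Fin b → ZMod 2)) + (β₁, β₂)
      = (m + s + β₁, m + s + β₂) := rfl
  rw [this, hper]
  rfl
end

section
/- Let g : F_2^n → F_2 be a Boolean function with deg(g) ≤ d < n, and let S_d = {y ∈ F_2^n : wt(y) ≤ d}. Then for every x ∈ F_2^n, g(x) = ⊕_{y ≤ x, y ∈ S_d} g(y) · (∑_{i=0}^{d − wt(y)} C(wt(x) − wt(y), i) mod 2), where y ≤ x means y_i ≤ x_i coordinatewise and C denotes the binomial coefficient. In particular, g is uniquely determined by its values on S_d. -/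
/-- Hamming weight of a vector in `F_2^n`. -/
def hwt {n : ℕ} (u : Fin n → ZMod 2) : ℕ :=
  (Finset.univ.filter fun i => u i = 1).card

/-- ANF (Möbius) coefficient of a Boolean function at the monomial index `u`. -/
def anf {n : ℕ} (g : (Fin n → ZMod 2) → ZMod 2) (u : Fin n → ZMod 2) : ZMod 2 :=
  ∑ x ∈ Finset.univ.filter (fun x : Fin n → ZMod 2 => ∀ i, x i = 1 → u i = 1), g x

open Finset

namespace Stmt17Aux

lemma zmod2_cases (a : ZMod 2) : a = 0 ∨ a = 1 := by revert a; decide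

lemma hwt_mono {n : ℕ} {x y : Fin n → ZMod 2} (h : ∀ i, y i = 1 → x i = 1) :
    hwt y ≤ hwt x := by
  apply Finset.card_le_card
  intro i hi
  simp only [mem_filter, mem_univ, true_and] at hi ⊢
  exact h i hi

/-- the "free" coordinate set between y and x -/
def A {n : ℕ} (x y : Fin n → ZMod 2) : Finset (Fin n) :=
  Finset.univ.filter fun i => x i = 1 ∧ ¬ y i = 1

lemma card_A {n : ℕ} {x y : Fin n → ZMod 2} (h : ∀ i, y i = 1 → x i = 1) :
    (A x y).card = hwt x - hwt y := by
  have : A x y = (Finset.univ.filter fun i => x i = 1) \ (Finset.univ.filter fun i => y i = 1) := by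
    ext i; simp [A]
  rw [this, card_sdiff_of_subset]
  · rfl
  · intro i hi
    simp only [mem_filter, mem_univ, true_and] at hi ⊢
    exact h i hi

lemma card_between {n : ℕ} (x y : Fin n → ZMod 2) (hyx : ∀ i, y i = 1 → x i = 1)
    (p : ℕ → Prop) [DecidablePred p] :
    (Finset.univ.filter fun u : Fin n → ZMod 2 =>
        (∀ i, y i = 1 → u i = 1) ∧ (∀ i, u i = 1 → x i = 1) ∧ p (hwt u)).card
    = ((A x y).powerset.filter fun S => p (hwt y + S.card)).card := by
  have hw : ∀ S ∈ (A x y).powerset, hwt (fun i => if i ∈ S then 1 else y i) = hwt y + S.card := by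
    intro S hS
    rw [mem_powerset] at hS
    have hsub : ∀ i ∈ S, x i = 1 ∧ ¬ y i = 1 := by
      intro i hi; have := hS hi; simpa [A] using this
    unfold hwt
    have : (Finset.univ.filter fun i => (if i ∈ S then (1 : ZMod 2) else y i) = 1)
        = (Finset.univ.filter fun i => y i = 1) ∪ S := by
      ext i
      simp only [mem_filter, mem_univ, true_and, mem_union]
      by_cases hi : i ∈ S
      · simp [hi]
      · simp [hi]
    rw [this, card_union_of_disjoint, add_comm]
    rw [Finset.disjoint_left]
    intro i hi hiS
    simp only [mem_filter, mem_univ, true_and] at hi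
    exact (hsub i hiS).2 hi
  apply Finset.card_nbij' (i := fun u => (A x y).filter fun i => u i = 1)
    (j := fun S i => if i ∈ S then 1 else y i)
  · intro u hu
    simp only [mem_coe, mem_filter, mem_univ, true_and] at hu
    obtain ⟨hyu, hux, hp⟩ := hu
    simp only [mem_coe, mem_filter, mem_powerset]
    have hset : (A x y).filter (fun i => u i = 1) = (Finset.univ.filter fun i => u i = 1) \
        (Finset.univ.filter fun i => y i = 1) := by
      ext i
      simp only [A, mem_filter, mem_univ, true_and, mem_sdiff]
      constructor
      · rintro ⟨⟨hx, hy⟩, hu⟩; exact ⟨hu, hy⟩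
      · rintro ⟨hu, hy⟩; exact ⟨⟨hux i hu, hy⟩, hu⟩
    have hsub2 : (Finset.univ.filter fun i => y i = 1) ⊆ (Finset.univ.filter fun i => u i = 1) := by
      intro i hi
      simp only [mem_filter, mem_univ, true_and] at hi ⊢
      exact hyu i hi
    have hcard : hwt y + ((A x y).filter fun i => u i = 1).card = hwt u := by
      rw [hset, card_sdiff_of_subset hsub2]
      have := hwt_mono hyu
      unfold hwt at *
      omega
    exact ⟨filter_subset _ _, by rw [hcard]; exact hp⟩
  · intro S hS
    simp only [mem_coe, mem_filter, mem_powerset] at hS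
    obtain ⟨hSA, hp⟩ := hS
    have hsub : ∀ i ∈ S, x i = 1 ∧ ¬ y i = 1 := by
      intro i hi; have := hSA hi; simpa [A] using this
    simp only [mem_coe, mem_filter, mem_univ, true_and]
    refine ⟨?_, ?_, ?_⟩
    · intro i hi
      by_cases hiS : i ∈ S
      · exact absurd hi (hsub i hiS).2
      · simp [hiS, hi]
    · intro i hi
      by_cases hiS : i ∈ S
      · exact (hsub i hiS).1
      · simp only [hiS, if_false] at hi
        exact hyx i hi
    · rw [hw S (mem_powerset.2 hSA)]; exact hp
  · intro u hu
    simp only [mem_coe, mem_filter, mem_univ, true_and] at hu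
    obtain ⟨hyu, hux, _⟩ := hu
    funext i
    by_cases hi : i ∈ (A x y).filter fun i => u i = 1
    · simp only [hi, if_true]
      simp only [mem_filter] at hi
      exact hi.2.symm
    · simp only [hi, if_false]
      simp only [A, mem_filter, mem_univ, true_and, not_and] at hi
      rcases zmod2_cases (u i) with h0 | h1
      · rcases zmod2_cases (y i) with hy0 | hy1
        · rw [h0, hy0]
        · exact absurd (hyu i hy1) (by rw [h0]; decide)
      · have hx := hux i h1
        rcases zmod2_cases (y i) with hy0 | hy1
        · exact absurd h1 (hi ⟨hx, by rw [hy0]; decide⟩)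
        · rw [h1, hy1]
  · intro S hS
    simp only [mem_coe, mem_filter, mem_powerset] at hS
    obtain ⟨hSA, _⟩ := hS
    ext i
    simp only [mem_filter]
    constructor
    · rintro ⟨hiA, hi⟩
      by_cases hiS : i ∈ S
      · exact hiS
      · simp only [hiS, if_false] at hi
        simp only [A, mem_filter, mem_univ, true_and] at hiA
        exact absurd hi hiA.2
    · intro hiS
      exact ⟨hSA hiS, by simp [hiS]⟩

end Stmt17Aux

namespace Stmt17Aux

lemma card_powerset_filter_le {n : ℕ} (B : Finset (Fin n)) (m : ℕ) :
    (B.powerset.filter fun S => S.card ≤ m).card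
      = ∑ i ∈ Finset.range (m + 1), (B.card).choose i := by
  rw [Finset.card_eq_sum_card_fiberwise (f := fun S => S.card) (t := Finset.range (m+1))
      (fun S hS => by simp only [mem_coe, mem_filter] at hS; simp [Nat.lt_succ_iff, hS.2])]
  refine Finset.sum_congr rfl fun i hi => ?_
  rw [mem_range, Nat.lt_succ_iff] at hi
  rw [← Finset.card_powersetCard, Finset.powersetCard_eq_filter]
  congr 1
  ext S
  simp only [mem_filter, mem_powerset]
  constructor
  · rintro ⟨⟨hS, _⟩, hc⟩; exact ⟨hS, hc⟩
  · rintro ⟨hS, hc⟩; exact ⟨⟨hS, hc ▸ hi⟩, hc⟩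

lemma card_T {n : ℕ} {x y : Fin n → ZMod 2} (hyx : ∀ i, y i = 1 → x i = 1)
    (d : ℕ) (hyd : hwt y ≤ d) :
    (Finset.univ.filter fun u : Fin n → ZMod 2 =>
        (∀ i, y i = 1 → u i = 1) ∧ (∀ i, u i = 1 → x i = 1) ∧ hwt u ≤ d).card
    = ∑ i ∈ Finset.range (d - hwt y + 1), (hwt x - hwt y).choose i := by
  rw [card_between x y hyx (fun m => m ≤ d)]
  rw [show ((A x y).powerset.filter fun S => hwt y + S.card ≤ d)
      = ((A x y).powerset.filter fun S => S.card ≤ d - hwt y) from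
    Finset.filter_congr (fun S _ => by constructor <;> (intro; omega))]
  rw [card_powerset_filter_le, card_A hyx]

lemma card_interval {n : ℕ} {x y : Fin n → ZMod 2} (hyx : ∀ i, y i = 1 → x i = 1) :
    (Finset.univ.filter fun u : Fin n → ZMod 2 =>
        (∀ i, y i = 1 → u i = 1) ∧ (∀ i, u i = 1 → x i = 1) ∧ True).card
    = 2 ^ (A x y).card := by
  rw [card_between x y hyx (fun _ => True)]
  rw [Finset.filter_true_of_mem (fun _ _ => trivial), Finset.card_powerset]

lemma A_self {n : ℕ} (x : Fin n → ZMod 2) : A x x = ∅ := by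
  ext i; simp [A]

lemma A_nonempty {n : ℕ} {x y : Fin n → ZMod 2} (hyx : ∀ i, y i = 1 → x i = 1)
    (hne : y ≠ x) : (A x y).Nonempty := by
  rw [Finset.nonempty_iff_ne_empty]
  intro hA
  apply hne
  funext i
  have hi : ¬ (x i = 1 ∧ ¬ y i = 1) := by
    intro h
    have : i ∈ A x y := by simp [A, h]
    simp [hA] at this
  rcases zmod2_cases (y i) with hy | hy <;> rcases zmod2_cases (x i) with hx | hx
  · rw [hy, hx]
  · exact absurd ⟨hx, by rw [hy]; decide⟩ hi
  · exact absurd (hyx i hy) (by rw [hx]; decide)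
  · rw [hy, hx]

lemma mobius {n : ℕ} (g : (Fin n → ZMod 2) → ZMod 2) (x : Fin n → ZMod 2) :
    ∑ u ∈ Finset.univ.filter (fun u : Fin n → ZMod 2 => ∀ i, u i = 1 → x i = 1),
      anf g u = g x := by
  unfold anf
  rw [Finset.sum_comm'
      (t' := Finset.univ.filter (fun y : Fin n → ZMod 2 => ∀ i, y i = 1 → x i = 1))
      (s' := fun y => Finset.univ.filter (fun u : Fin n → ZMod 2 =>
        (∀ i, y i = 1 → u i = 1) ∧ (∀ i, u i = 1 → x i = 1) ∧ True))
      (h := by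
        intro u y
        simp only [mem_filter, mem_univ, true_and, and_true]
        constructor
        · rintro ⟨hux, hyu⟩; exact ⟨⟨hyu, hux⟩, fun i hi => hux i (hyu i hi)⟩
        · rintro ⟨⟨hyu, hux⟩, _⟩; exact ⟨hux, hyu⟩)]
  rw [Finset.sum_eq_single_of_mem x (by simp)]
  · rw [Finset.sum_const, nsmul_eq_mul, card_interval (fun i h => h), A_self,
      Finset.card_empty, pow_zero, Nat.cast_one, one_mul]
  · intro y hy hne
    simp only [mem_filter, mem_univ, true_and] at hy
    rw [Finset.sum_const, nsmul_eq_mul, card_interval hy]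
    have hcard : (A x y).card ≠ 0 := Finset.card_ne_zero_of_mem (A_nonempty hy hne).choose_spec
    rw [Nat.cast_pow]
    have : ((2 : ℕ) : ZMod 2) = 0 := by decide
    rw [this, zero_pow hcard, zero_mul]

end Stmt17Aux

namespace Stmt17Aux

lemma key {n : ℕ} (d : ℕ) (g : (Fin n → ZMod 2) → ZMod 2)
    (hdeg : ∀ u, anf g u ≠ 0 → hwt u ≤ d) (x : Fin n → ZMod 2) :
    g x = ∑ y ∈ Finset.univ.filter
        (fun y : Fin n → ZMod 2 => (∀ i, y i = 1 → x i = 1) ∧ hwt y ≤ d),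
      g y * ((∑ i ∈ Finset.range (d - hwt y + 1),
        Nat.choose (hwt x - hwt y) i : ℕ) : ZMod 2) := by
  symm
  have step1 : ∀ y ∈ Finset.univ.filter
      (fun y : Fin n → ZMod 2 => (∀ i, y i = 1 → x i = 1) ∧ hwt y ≤ d),
      g y * ((∑ i ∈ Finset.range (d - hwt y + 1),
        Nat.choose (hwt x - hwt y) i : ℕ) : ZMod 2)
      = ∑ u ∈ Finset.univ.filter (fun u : Fin n → ZMod 2 =>
          (∀ i, y i = 1 → u i = 1) ∧ (∀ i, u i = 1 → x i = 1) ∧ hwt u ≤ d), g y := by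
    intro y hy
    simp only [mem_filter, mem_univ, true_and] at hy
    rw [← card_T hy.1 d hy.2, Finset.sum_const, nsmul_eq_mul]
    ring
  rw [Finset.sum_congr rfl step1]
  rw [Finset.sum_comm'
      (t' := Finset.univ.filter (fun u : Fin n → ZMod 2 =>
        (∀ i, u i = 1 → x i = 1) ∧ hwt u ≤ d))
      (s' := fun u => Finset.univ.filter (fun y : Fin n → ZMod 2 => ∀ i, y i = 1 → u i = 1))
      (h := by
        intro y u
        simp only [mem_filter, mem_univ, true_and]
        constructor
        · rintro ⟨_, hyu, hux, hud⟩; exact ⟨hyu, hux, hud⟩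
        · rintro ⟨hyu, hux, hud⟩
          exact ⟨⟨fun i hi => hux i (hyu i hi),
            le_trans (hwt_mono hyu) hud⟩, hyu, hux, hud⟩)]
  have step2 : ∀ u ∈ Finset.univ.filter (fun u : Fin n → ZMod 2 =>
      (∀ i, u i = 1 → x i = 1) ∧ hwt u ≤ d),
      (∑ y ∈ Finset.univ.filter (fun y : Fin n → ZMod 2 => ∀ i, y i = 1 → u i = 1), g y)
      = anf g u := fun _ _ => rfl
  rw [Finset.sum_congr rfl step2]
  rw [← mobius g x]
  apply Finset.sum_subset
  · intro u hu
    simp only [mem_filter, mem_univ, true_and] at hu ⊢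
    exact hu.1
  · intro u hu hu2
    by_contra h
    have hd := hdeg u h
    simp only [mem_filter, mem_univ, true_and, not_and] at hu hu2
    exact absurd hd (hu2 hu)

end Stmt17Aux

theorem stmt_17 {n : ℕ} (g : (Fin n → ZMod 2) → ZMod 2) (d : ℕ) (hdn : d < n)
    (hdeg : ∀ u, anf g u ≠ 0 → hwt u ≤ d) :
    (∀ x : Fin n → ZMod 2,
      g x = ∑ y ∈ Finset.univ.filter
          (fun y : Fin n → ZMod 2 => (∀ i, y i = 1 → x i = 1) ∧ hwt y ≤ d),
        g y * ((∑ i ∈ Finset.range (d - hwt y + 1),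
          Nat.choose (hwt x - hwt y) i : ℕ) : ZMod 2)) ∧
      (∀ g₁ g₂ : (Fin n → ZMod 2) → ZMod 2,
        (∀ u, anf g₁ u ≠ 0 → hwt u ≤ d) → (∀ u, anf g₂ u ≠ 0 → hwt u ≤ d) →
        (∀ y, hwt y ≤ d → g₁ y = g₂ y) → g₁ = g₂) := by
  refine ⟨Stmt17Aux.key d g hdeg, ?_⟩
  intro g₁ g₂ h1 h2 hagree
  funext x
  rw [Stmt17Aux.key d g₁ h1 x, Stmt17Aux.key d g₂ h2 x]
  apply Finset.sum_congr rfl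
  intro y hy
  simp only [Finset.mem_filter, Finset.mem_univ, true_and] at hy
  rw [hagree y hy.2]
end
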